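/- Let D ∈ ℝ^{N×N} be skew-symmetric with D𝟙 = 0, and suppose C_0, ..., C_{N_v-1} : ℝ → ℝᴺ and E : ℝ → ℝᴺ satisfy dC_n/dt = -D Q_n - (q/(mα)) E ⊙ (√(n/2) C_{n-1} - √((n+1)/2) C_{n+1}), where Q_n = α√(n/2) C_{n-1} + α√((n+1)/2) C_{n+1} + u C_n, C_{-1} = C_{N_v} = 0, and ⊙ is the entrywise product. Then d/dt Σ_{n=0}^{N_v-1} ⟨C_n, C_n⟩ = 0. -/

import Mathlib

open Matrix Finset

theorem sw_semidiscrete_norm_invariant {N : ℕ} (Nv : ℕ)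
    (D : Matrix (Fin N) (Fin N) ℝ) (hD : Dᵀ = -D)
    (hD1 : D.mulVec (fun _ => (1 : ℝ)) = 0)
    (α u q m : ℝ) (hα : 0 < α) (hm : m ≠ 0)
    (C : ℕ → ℝ → Fin N → ℝ) (E : ℝ → Fin N → ℝ)
    (hCtop : ∀ t, C Nv t = 0)
    (Q : ℕ → ℝ → Fin N → ℝ)
    (hQ : ∀ n t, Q n t = (α * Real.sqrt ((n : ℝ) / 2)) • C (n - 1) t
        + (α * Real.sqrt (((n : ℝ) + 1) / 2)) • C (n + 1) t + u • C n t)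
    (hevol : ∀ n < Nv, ∀ t, HasDerivAt (C n)
        (-(D.mulVec (Q n t)) - (q / (m * α)) • (E t *
          (Real.sqrt ((n : ℝ) / 2) • C (n - 1) t
            - Real.sqrt (((n : ℝ) + 1) / 2) • C (n + 1) t))) t) :
    ∀ t, HasDerivAt (fun t => ∑ n ∈ range Nv, C n t ⬝ᵥ C n t) 0 t := by
  intro t
  set c : ℝ := q / (m * α) with hc
  set f : ℕ → Fin N → ℝ := fun n =>
    -(D.mulVec (Q n t)) - c • (E t *
      (Real.sqrt ((n : ℝ) / 2) • C (n - 1) t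
        - Real.sqrt (((n : ℝ) + 1) / 2) • C (n + 1) t)) with hf
  -- bilinear gadgets
  set b : ℕ → ℝ := fun n => Real.sqrt (((n : ℝ) + 1) / 2) with hb
  set X : ℕ → ℕ → ℝ := fun i j => C i t ⬝ᵥ (D *ᵥ C j t) with hX
  set S : ℕ → ℕ → ℝ := fun i j => C i t ⬝ᵥ (E t * C j t) with hS
  have Xskew : ∀ i j : ℕ, X i j = - X j i := by
    intro i j
    show C i t ⬝ᵥ (D *ᵥ C j t) = -(C j t ⬝ᵥ (D *ᵥ C i t))
    rw [dotProduct_mulVec, ← Matrix.mulVec_transpose, hD, Matrix.neg_mulVec,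
      neg_dotProduct, dotProduct_comm]
  have Xdiag : ∀ i : ℕ, X i i = 0 := by
    intro i; have := Xskew i i; linarith
  have Ssymm : ∀ i j : ℕ, S i j = S j i := by
    intro i j
    show C i t ⬝ᵥ (E t * C j t) = C j t ⬝ᵥ (E t * C i t)
    simp only [dotProduct, Pi.mul_apply]
    exact Finset.sum_congr rfl fun k _ => by ring
  set H : ℕ → ℝ := fun n => match n with
    | 0 => 0
    | (k + 1) => -(α * b k) * X k (k + 1) + c * b k * S k (k + 1) with hH
  have expand : ∀ n : ℕ, C n t ⬝ᵥ f n
      = -(α * Real.sqrt ((n : ℝ) / 2) * X n (n - 1)) - α * b n * X n (n + 1)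
        - u * X n n - c * Real.sqrt ((n : ℝ) / 2) * S n (n - 1)
        + c * b n * S n (n + 1) := by
    intro n
    simp only [hf, hQ, hX, hS, hb]
    simp only [mulVec_add, Matrix.mulVec_smul, mul_sub, mul_smul_comm,
      dotProduct_add, dotProduct_sub, dotProduct_neg, dotProduct_smul,
      smul_eq_mul, smul_sub]
    ring
  have key : ∀ n : ℕ, C n t ⬝ᵥ f n = H (n + 1) - H n := by
    intro n
    rw [expand n]
    match n with
    | 0 =>
      simp only [hH]
      norm_num [Xdiag]
    | (k + 1) =>
      have ha : Real.sqrt (((k + 1 : ℕ) : ℝ) / 2) = b k := by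
        rw [hb]; push_cast; ring_nf
      simp only [hH, Nat.add_sub_cancel, ha, Xdiag, Xskew (k + 1) k,
        Ssymm (k + 1) k]
      push_cast
      ring
  have hHNv : H Nv = 0 := by
    match Nv, hCtop with
    | 0, _ => simp [hH]
    | (k + 1), hCtop =>
      have h0 : C (k + 1) t = 0 := by rw [hCtop]
      simp only [hH, hX, hS, h0, Matrix.mulVec_zero, dotProduct_zero, mul_zero]
      ring
  have hderiv : HasDerivAt (fun t => ∑ n ∈ range Nv, C n t ⬝ᵥ C n t)
      (∑ n ∈ range Nv, ∑ i, (f n i * C n t i + C n t i * f n i)) t := by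
    apply HasDerivAt.fun_sum
    intro n hn
    have h1 := hevol n (mem_range.mp hn) t
    have h2 : ∀ i, HasDerivAt (fun t => C n t i) (f n i) t := by
      intro i
      exact hasDerivAt_pi.mp h1 i
    simp only [dotProduct]
    exact HasDerivAt.fun_sum fun i _ => (h2 i).mul (h2 i)
  have hzero : (∑ n ∈ range Nv, ∑ i, (f n i * C n t i + C n t i * f n i)) = 0 := by
    have step : ∀ n, (∑ i, (f n i * C n t i + C n t i * f n i))
        = 2 * (C n t ⬝ᵥ f n) := by
      intro n
      simp only [dotProduct, Finset.mul_sum, ← Finset.sum_add_distrib]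
      exact Finset.sum_congr rfl fun i _ => by ring
    simp only [step, key]
    have hH0 : H 0 = 0 := rfl
    rw [← Finset.mul_sum, Finset.sum_range_sub, hHNv, hH0]
    ring
  rwa [hzero] at hderiv
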